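/- arXiv:1607.04685 — 2 statements merged into one kernel-verified Lean document; each statement's English description precedes it below -/
import Mathlib

section
/- If x satisfies liminf_{n→∞} (1/n) Σ_{k=0}^{n-1} g(f^k(x)) > λ̄ > 0 for a bounded function g, then the set of λ̄-effective hyperbolic times Γ(x) = {n : Σ_{j=k}^{n-1} g(f^j(x)) ≥ λ̄(n−k) for all 0 ≤ k < n} is infinite and has positive lower asymptotic density. -/
open Filter

open scoped Classical in
/-- Pliss-type counting lemma: records of a sequence with bounded increments. -/
lemma pliss_count (S : ℕ → ℝ) (B : ℝ) (hB : 0 < B) (hS0 : S 0 = 0)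
    (hstep : ∀ n, S (n + 1) ≤ S n + B) :
    ∀ N, ∀ k ≤ N, S k ≤ B *
      (((Finset.range (N + 1)).filter (fun n => ∀ j < n, S j ≤ S n)).card : ℝ) := by
  intro N
  induction N with
  | zero =>
      intro k hk
      interval_cases k
      have h0 : (0 : ℕ) ∈ (Finset.range 1).filter (fun n => ∀ j < n, S j ≤ S n) := by
        simp
      have hcard : 1 ≤ ((Finset.range 1).filter (fun n => ∀ j < n, S j ≤ S n)).card :=
        Finset.card_pos.mpr ⟨0, h0⟩
      have : (1 : ℝ) ≤ (((Finset.range 1).filter (fun n => ∀ j < n, S j ≤ S n)).card : ℝ) := by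
        exact_mod_cast hcard
      nlinarith
  | succ N ih =>
      intro k hk
      have hmono : ((Finset.range (N + 1)).filter (fun n => ∀ j < n, S j ≤ S n)).card ≤
          ((Finset.range (N + 2)).filter (fun n => ∀ j < n, S j ≤ S n)).card := by
        apply Finset.card_le_card
        apply Finset.filter_subset_filter
        exact Finset.range_subset_range.mpr (by omega)
      have hmono' : (((Finset.range (N + 1)).filter (fun n => ∀ j < n, S j ≤ S n)).card : ℝ) ≤
          (((Finset.range (N + 2)).filter (fun n => ∀ j < n, S j ≤ S n)).card : ℝ) := by
        exact_mod_cast hmono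
      rcases Nat.lt_or_ge k (N + 1) with hk' | hk'
      · have := ih k (by omega)
        nlinarith
      · have hkeq : k = N + 1 := by omega
        subst hkeq
        by_cases hrec : ∀ j < N + 1, S j ≤ S (N + 1)
        · -- record case: count increases
          have hsplit : (Finset.range (N + 2)).filter (fun n => ∀ j < n, S j ≤ S n) =
              insert (N + 1) ((Finset.range (N + 1)).filter (fun n => ∀ j < n, S j ≤ S n)) := by
            rw [Finset.range_add_one, Finset.filter_insert, if_pos hrec]
          have hnot : (N + 1) ∉ (Finset.range (N + 1)).filter (fun n => ∀ j < n, S j ≤ S n) := by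
            simp
          have hcard : ((Finset.range (N + 2)).filter (fun n => ∀ j < n, S j ≤ S n)).card =
              ((Finset.range (N + 1)).filter (fun n => ∀ j < n, S j ≤ S n)).card + 1 := by
            rw [hsplit, Finset.card_insert_of_notMem hnot]
          have h1 := ih N (le_refl N)
          have h2 := hstep N
          rw [hcard]
          push_cast
          nlinarith
        · -- not a record: S (N+1) < S j for some j ≤ N
          push_neg at hrec
          obtain ⟨j, hj, hjS⟩ := hrec
          have := ih j (by omega)
          nlinarith

/-- If the Birkhoff averages of a bounded function `g` along the orbit
of `x` have liminf strictly greater than `λ̄ > 0`, then the set of `λ̄`-effective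
hyperbolic times (Pliss times) is infinite and has positive lower asymptotic
density. -/
theorem effective_hyperbolic_times_infinite {X : Type*}
    (f : X → X) (g : X → ℝ) (C : ℝ) (hg : ∀ y : X, |g y| ≤ C)
    (lam : ℝ) (hlam : 0 < lam) (x : X)
    (hlim : lam <
      liminf (fun n : ℕ => (n : ℝ)⁻¹ * ∑ k ∈ Finset.range n, g (f^[k] x)) atTop)
    (Γ : Set ℕ)
    (hΓ : Γ = {n : ℕ | ∀ k : ℕ, k < n →
      lam * ((n : ℝ) - (k : ℝ)) ≤ ∑ j ∈ Finset.Ico k n, g (f^[j] x)}) :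
    Γ.Infinite ∧
      0 < liminf (fun N : ℕ => ((Γ ∩ Set.Iio N).ncard : ℝ) / N) atTop := by
  classical
  set a : ℕ → ℝ := fun k => g (f^[k] x) with ha
  set S : ℕ → ℝ := fun n => ∑ k ∈ Finset.range n, (a k - lam) with hS
  have hC : 0 ≤ C := le_trans (abs_nonneg _) (hg x)
  set B : ℝ := C + lam with hB
  have hBpos : 0 < B := by positivity
  -- the difference formula
  have hdiff : ∀ k n : ℕ, k ≤ n → S n - S k = (∑ j ∈ Finset.Ico k n, a j) - lam * ((n : ℝ) - k) := by
    intro k n hkn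
    have h1 : S k + ∑ j ∈ Finset.Ico k n, (a j - lam) = S n := by
      simp only [hS, Finset.range_eq_Ico]
      exact Finset.sum_Ico_consecutive _ (Nat.zero_le k) hkn
    have h2 : ∑ j ∈ Finset.Ico k n, (a j - lam) =
        (∑ j ∈ Finset.Ico k n, a j) - lam * ((n : ℝ) - k) := by
      rw [Finset.sum_sub_distrib, Finset.sum_const, Nat.card_Ico, nsmul_eq_mul,
        Nat.cast_sub hkn]
      ring
    linarith [h1, h2]
  -- Γ is the record set of S
  have hΓrec : ∀ n : ℕ, n ∈ Γ ↔ ∀ j < n, S j ≤ S n := by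
    intro n
    rw [hΓ]
    simp only [Set.mem_setOf_eq]
    constructor
    · intro h j hj
      have := h j hj
      have hd := hdiff j n (le_of_lt hj)
      linarith
    · intro h j hj
      have := h j hj
      have hd := hdiff j n (le_of_lt hj)
      linarith
  -- S grows linearly
  set L := liminf (fun n : ℕ => (n : ℝ)⁻¹ * ∑ k ∈ Finset.range n, g (f^[k] x)) atTop with hL
  set ε : ℝ := (L - lam) / 2 with hε
  have hεpos : 0 < ε := by
    have : lam < L := hlim
    rw [hε]; linarith
  have hbddkey : ∀ n : ℕ, -C ≤ (n : ℝ)⁻¹ * ∑ k ∈ Finset.range n, g (f^[k] x) := by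
    intro n
    rcases Nat.eq_zero_or_pos n with h0 | hpos
    · subst h0; simp; linarith
    · have hn : (0 : ℝ) < n := by exact_mod_cast hpos
      have hsum : -(C * n) ≤ ∑ k ∈ Finset.range n, g (f^[k] x) := by
        have h : ∀ k ∈ Finset.range n, -C ≤ g (f^[k] x) := fun k _ =>
          neg_le_of_abs_le (hg _)
        calc -(C * n) = ∑ _k ∈ Finset.range n, (-C) := by
              rw [Finset.sum_const, Finset.card_range, nsmul_eq_mul]; ring
          _ ≤ _ := Finset.sum_le_sum h
      rw [neg_le, ← mul_neg]
      calc (n:ℝ)⁻¹ * (-(∑ k ∈ Finset.range n, g (f^[k] x))) ≤ (n:ℝ)⁻¹ * (C * n) := by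
            apply mul_le_mul_of_nonneg_left _ (by positivity)
            linarith
        _ = C := by field_simp
  have hbdd : IsBoundedUnder (· ≥ ·) atTop
      (fun n : ℕ => (n : ℝ)⁻¹ * ∑ k ∈ Finset.range n, g (f^[k] x)) :=
    isBoundedUnder_of ⟨-C, fun n => hbddkey n⟩
  have hev : ∀ᶠ n : ℕ in atTop, lam + ε < (n : ℝ)⁻¹ * ∑ k ∈ Finset.range n, g (f^[k] x) := by
    apply eventually_lt_of_lt_liminf _ hbdd
    rw [← hL, hε]; linarith
  have hevS : ∀ᶠ n : ℕ in atTop, ε * n ≤ S n := by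
    filter_upwards [hev, eventually_ge_atTop 1] with n hn hn1
    have hnpos : (0 : ℝ) < n := by exact_mod_cast hn1
    have hsum : (lam + ε) * n < ∑ k ∈ Finset.range n, g (f^[k] x) := by
      have := mul_lt_mul_of_pos_left hn hnpos
      rw [← mul_assoc, mul_inv_cancel₀ (ne_of_gt hnpos), one_mul] at this
      linarith [this]
    have hSn : S n = (∑ k ∈ Finset.range n, a k) - lam * n := by
      simp only [hS, Finset.sum_sub_distrib, Finset.sum_const, Finset.card_range, nsmul_eq_mul]
      ring
    rw [hSn]
    simp only [ha]
    nlinarith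
  obtain ⟨N₀, hN₀⟩ := eventually_atTop.mp hevS
  -- counting
  have hS0 : S 0 = 0 := by simp [hS]
  have hstep : ∀ n, S (n + 1) ≤ S n + B := by
    intro n
    have : S (n + 1) = S n + (a n - lam) := by
      simp only [hS, Finset.sum_range_succ]
    have hga : a n ≤ C := le_of_abs_le (hg _)
    rw [this, hB]; linarith
  have hcount := pliss_count S B hBpos hS0 hstep
  -- relate ncard to finset card
  have hncard : ∀ N : ℕ, ((Γ ∩ Set.Iio N).ncard : ℝ) =
      (((Finset.range N).filter (fun n => ∀ j < n, S j ≤ S n)).card : ℝ) := by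
    intro N
    congr 1
    have hset : Γ ∩ Set.Iio N =
        ↑((Finset.range N).filter (fun n => ∀ j < n, S j ≤ S n)) := by
      ext n
      simp only [Set.mem_inter_iff, Set.mem_Iio, Finset.coe_filter, Set.mem_setOf_eq,
        Finset.mem_range]
      rw [hΓrec n]
      tauto
    rw [hset, Set.ncard_coe_finset]
  -- key inequality
  have hkey : ∀ N ≥ N₀, ε * N ≤ B * ((Γ ∩ Set.Iio (N + 1)).ncard : ℝ) := by
    intro N hN
    rw [hncard]
    exact le_trans (hN₀ N hN) (hcount N N (le_refl N))
  constructor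
  · -- infinite
    intro hfin
    obtain ⟨M, hM⟩ := exists_nat_gt (B * (Γ.ncard : ℝ) / ε)
    set N := max M N₀ with hN
    have h1 := hkey N (le_max_right _ _)
    have h2 : ((Γ ∩ Set.Iio (N + 1)).ncard : ℝ) ≤ (Γ.ncard : ℝ) := by
      have : (Γ ∩ Set.Iio (N + 1)).ncard ≤ Γ.ncard :=
        Set.ncard_le_ncard Set.inter_subset_left hfin
      exact_mod_cast this
    have hMN : (M : ℝ) ≤ N := by exact_mod_cast le_max_left M N₀
    have : B * (Γ.ncard : ℝ) / ε < (N : ℝ) := lt_of_lt_of_le hM hMN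
    have hB2 : B * (Γ.ncard : ℝ) < ε * N := by
      rw [div_lt_iff₀ hεpos] at this
      linarith
    nlinarith [mul_le_mul_of_nonneg_left h2 (le_of_lt hBpos)]
  · -- positive density
    set d : ℝ := ε / (2 * B) with hd
    have hdpos : 0 < d := by positivity
    apply lt_of_lt_of_le hdpos
    apply le_liminf_of_le
    · apply isCoboundedUnder_ge_of_eventually_le atTop (x := 1)
      filter_upwards [eventually_ge_atTop 1] with N hN
      have hNpos : (0 : ℝ) < N := by exact_mod_cast hN
      rw [div_le_one hNpos]
      have : (Γ ∩ Set.Iio N).ncard ≤ N := by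
        calc (Γ ∩ Set.Iio N).ncard ≤ (Set.Iio N).ncard :=
              Set.ncard_le_ncard Set.inter_subset_right (Set.finite_Iio N)
          _ = N := by
              rw [← Finset.coe_range, Set.ncard_coe_finset, Finset.card_range]
      exact_mod_cast this
    · filter_upwards [eventually_ge_atTop (max (N₀ + 1) 2)] with N hN
      have hN2 : 2 ≤ N := le_trans (le_max_right _ _) hN
      have hN0 : N₀ ≤ N - 1 := by omega
      have hNpos : (0 : ℝ) < N := by
        have : (0:ℕ) < N := by omega
        exact_mod_cast this
      have h1 := hkey (N - 1) hN0
      have hrw : (N - 1) + 1 = N := by omega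
      rw [hrw] at h1
      have hcast : ((N - 1 : ℕ) : ℝ) = (N : ℝ) - 1 := by
        rw [Nat.cast_sub (by omega)]; simp
      rw [hcast] at h1
      -- ε (N-1) ≤ B * c, want d ≤ c / N, i.e. ε N / (2B) ≤ c * ... 
      rw [hd, div_le_div_iff₀ (by positivity) hNpos]
      have h2 : (N : ℝ) ≤ 2 * ((N : ℝ) - 1) := by
        have : (2 : ℝ) ≤ N := by exact_mod_cast hN2
        linarith
      nlinarith
end

section
/- (Pliss lemma) Let a_1, ..., a_N be real numbers with a_i ≤ A for all i and Σ_{i=1}^N a_i ≥ cN for some c < A. Then for any c' < c, there exist at least θN indices n (with θ = (c−c')/(A−c')) such that Σ_{i=k+1}^{n} a_i ≥ c'(n−k) for all 0 ≤ k < n. -/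
open Finset

noncomputable def plissM (S : ℕ → ℝ) : ℕ → ℝ
  | 0 => 0
  | n + 1 => max (plissM S n) (S (n + 1))

lemma le_plissM (S : ℕ → ℝ) (hS0 : S 0 = 0) : ∀ n, ∀ k ≤ n, S k ≤ plissM S n := by
  intro n
  induction n with
  | zero => intro k hk; interval_cases k; simp [plissM, hS0]
  | succ n ih =>
    intro k hk
    rcases Nat.lt_succ_iff_lt_or_eq.mp (Nat.lt_succ_of_le hk) with h | h
    · exact le_trans (ih k (Nat.lt_succ_iff.mp h)) (le_max_left _ _)
    · subst h; exact le_max_right _ _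

/-- Pliss lemma: If `a_1, …, a_N ≤ A` and `∑ a_i ≥ cN` with `c < A`,
then for any `c' < c` there are at least `θN` indices `n ∈ [1,N]`, with
`θ = (c - c')/(A - c')`, such that `∑_{i=k+1}^n a_i ≥ c'(n-k)` for all `0 ≤ k < n`. -/
theorem pliss_lemma (N : ℕ) (hN : 0 < N) (a : ℕ → ℝ) (A c c' : ℝ)
    (hA : ∀ i ∈ Finset.Icc 1 N, a i ≤ A) (hcA : c < A) (hc' : c' < c)
    (hsum : c * (N : ℝ) ≤ ∑ i ∈ Finset.Icc 1 N, a i) :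
    ((c - c') / (A - c')) * (N : ℝ) ≤
      (({n : ℕ | n ∈ Finset.Icc 1 N ∧ ∀ k : ℕ, k < n →
        c' * ((n : ℝ) - (k : ℝ)) ≤ ∑ i ∈ Finset.Icc (k + 1) n, a i}).ncard : ℝ) := by
  classical
  set S : ℕ → ℝ := fun n => ∑ i ∈ Finset.Ioc 0 n, (a i - c') with hSdef
  have hS0 : S 0 = 0 := by simp [hSdef]
  have hAc : (0:ℝ) < A - c' := by linarith
  -- difference formula
  have hdiff : ∀ k n : ℕ, k ≤ n →
      S n - S k = (∑ i ∈ Finset.Icc (k+1) n, a i) - c' * ((n:ℝ) - (k:ℝ)) := by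
    intro k n hk
    have h1 : ∑ i ∈ Finset.Ioc 0 k, (a i - c') + ∑ i ∈ Finset.Ioc k n, (a i - c')
        = ∑ i ∈ Finset.Ioc 0 n, (a i - c') :=
      Finset.sum_Ioc_consecutive _ (Nat.zero_le k) hk
    have h2 : S n - S k = ∑ i ∈ Finset.Ioc k n, (a i - c') := by
      simp only [hSdef]; linarith
    rw [h2, Finset.sum_sub_distrib, Finset.sum_const, Nat.card_Ioc, nsmul_eq_mul,
      Nat.cast_sub hk, Finset.Icc_add_one_left_eq_Ioc]
    ring
  -- the defining predicate matches `S k ≤ S n`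
  have hequiv : ∀ n : ℕ, (∀ k : ℕ, k < n →
      c' * ((n : ℝ) - (k : ℝ)) ≤ ∑ i ∈ Finset.Icc (k + 1) n, a i) ↔
      (∀ k : ℕ, k < n → S k ≤ S n) := by
    intro n
    constructor
    · intro h k hk
      have := h k hk
      have hd := hdiff k n hk.le
      linarith
    · intro h k hk
      have := h k hk
      have hd := hdiff k n hk.le
      linarith
  set P : ℕ → Prop := fun n => ∀ k : ℕ, k < n → S k ≤ S n with hPdef
  set H : Finset ℕ := (Finset.Icc 1 N).filter P with hHdef
  -- the set is the coercion of H
  have hset : {n : ℕ | n ∈ Finset.Icc 1 N ∧ ∀ k : ℕ, k < n →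
      c' * ((n : ℝ) - (k : ℝ)) ≤ ∑ i ∈ Finset.Icc (k + 1) n, a i} = ↑H := by
    ext n
    simp only [Set.mem_setOf_eq, hHdef, Finset.coe_filter, Finset.mem_Icc, hPdef]
    exact and_congr_right fun _ => hequiv n
  rw [hset, Set.ncard_coe_finset]
  -- step bound
  have hstep : ∀ n ∈ Finset.range N,
      plissM S (n+1) - plissM S n ≤ (if P (n+1) then A - c' else 0) := by
    intro n hn
    rw [Finset.mem_range] at hn
    by_cases hp : P (n+1)
    · rw [if_pos hp]
      have han : a (n+1) ≤ A := hA (n+1) (by simp [Nat.succ_le_of_lt hn, Finset.mem_Icc])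
      have hSn : S (n+1) - S n = a (n+1) - c' := by
        rw [hdiff n (n+1) (Nat.le_succ n), Finset.Icc_self, Finset.sum_singleton]
        push_cast; ring
      have hMn : S n ≤ plissM S n := le_plissM S hS0 n n le_rfl
      have : plissM S (n+1) ≤ plissM S n + (A - c') := by
        rw [show plissM S (n+1) = max (plissM S n) (S (n+1)) from rfl]
        apply max_le <;> linarith
      linarith
    · rw [if_neg hp]
      simp only [hPdef] at hp
      push_neg at hp
      obtain ⟨k, hk, hlt⟩ := hp
      have : S (n+1) ≤ plissM S n :=
        le_trans hlt.le (le_plissM S hS0 n k (Nat.lt_succ_iff.mp hk))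
      have : plissM S (n+1) = plissM S n := by
        rw [show plissM S (n+1) = max (plissM S n) (S (n+1)) from rfl]
        exact max_eq_left this
      linarith
  -- telescoping
  have htel : ∑ n ∈ Finset.range N, (plissM S (n+1) - plissM S n) = plissM S N := by
    rw [Finset.sum_range_sub (plissM S)]
    simp [plissM]
  -- sum of indicator
  have hcard : ∑ n ∈ Finset.range N, (if P (n+1) then A - c' else 0)
      = (H.card : ℝ) * (A - c') := by
    rw [← Finset.sum_filter, Finset.sum_const, nsmul_eq_mul]
    congr 2
    apply Finset.card_bij (fun n _ => n + 1)
    · intro n hn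
      simp only [Finset.mem_filter, Finset.mem_range] at hn
      simp only [hHdef, Finset.mem_filter, Finset.mem_Icc]
      exact ⟨⟨by omega, by omega⟩, hn.2⟩
    · intro n hn m hm h; omega
    · intro m hm
      simp only [hHdef, Finset.mem_filter, Finset.mem_Icc] at hm
      refine ⟨m - 1, ?_, by omega⟩
      simp only [Finset.mem_filter, Finset.mem_range]
      refine ⟨by omega, ?_⟩
      have hm1 : m - 1 + 1 = m := by omega
      rw [hm1]; exact hm.2
  -- main chain
  have hSN : (c - c') * (N : ℝ) ≤ S N := by
    have : S N = (∑ i ∈ Finset.Icc 1 N, a i) - c' * (N : ℝ) := by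
      have := hdiff 0 N (Nat.zero_le N)
      simpa [hS0] using this
    rw [this]
    nlinarith
  have hMN : S N ≤ plissM S N := le_plissM S hS0 N N le_rfl
  have hfinal : plissM S N ≤ (H.card : ℝ) * (A - c') := by
    calc plissM S N = ∑ n ∈ Finset.range N, (plissM S (n+1) - plissM S n) := htel.symm
      _ ≤ ∑ n ∈ Finset.range N, (if P (n+1) then A - c' else 0) :=
          Finset.sum_le_sum hstep
      _ = (H.card : ℝ) * (A - c') := hcard
  rw [div_mul_eq_mul_div, div_le_iff₀ hAc]
  linarith
end
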